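/- The function u(x,y,z,t) = (x²+y²)z² + (1/24)(x²+y²)³ + (4z² + 2(x²+y²)²)t + 17(x²+y²)t² + (68/3)t³ is a classical solution of the horizontal heat equation ∂_t u = Δ_H u at every point of ℍ × ℝ, and for every t ≥ 0 the symmetrized horizontal Hessian (∇_H²u)*(p,t) is a positive semidefinite 2×2 matrix at every p ∈ ℍ (i.e., u(·,t) is v-convex on ℍ). -/

import Mathlib

set_option maxHeartbeats 1000000


noncomputable section

/-- The Heisenberg group as a set: `ℝ³` with coordinates `(x, y, z)`. -/
abbrev Heis : Type := ℝ × ℝ × ℝ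

/-- The Heisenberg group multiplication. -/
def Hmul (p q : Heis) : Heis :=
  (p.1 + q.1, p.2.1 + q.2.1, p.2.2 + q.2.2 + (p.1 * q.2.1 - q.1 * p.2.1) / 2)

/-- The Heisenberg group inverse. -/
def Hinv (p : Heis) : Heis := (-p.1, -p.2.1, -p.2.2)

/-- The Korányi gauge `|p|_G = ((x² + y²)² + 16 z²)^(1/4)`. -/
def kGauge (p : Heis) : ℝ := ((p.1 ^ 2 + p.2.1 ^ 2) ^ 2 + 16 * p.2.2 ^ 2) ^ ((1 : ℝ) / 4)

/-- The left-invariant gauge metric `d_L(p,q) = |p⁻¹·q|_G`. -/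
def dL (p q : Heis) : ℝ := kGauge (Hmul (Hinv p) q)

/-- The right-invariant gauge metric `d_R(p,q) = |p·q⁻¹|_G`. -/
def dR (p q : Heis) : ℝ := kGauge (Hmul p (Hinv q))

/-- The horizontal vector field `X₁ = ∂ₓ - (y/2)∂_z` applied to `f` at `p`. -/
def X1 (f : Heis → ℝ) (p : Heis) : ℝ := fderiv ℝ f p (1, 0, -p.2.1 / 2)

/-- The horizontal vector field `X₂ = ∂_y + (x/2)∂_z` applied to `f` at `p`. -/
def X2 (f : Heis → ℝ) (p : Heis) : ℝ := fderiv ℝ f p (0, 1, p.1 / 2)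

/-- The horizontal Laplacian `Δ_H f = X₁(X₁ f) + X₂(X₂ f)`. -/
def deltaH (f : Heis → ℝ) (p : Heis) : ℝ := X1 (X1 f) p + X2 (X2 f) p

/-- The symmetrized horizontal Hessian `(∇_H² f)*`. -/
def hessH (f : Heis → ℝ) (p : Heis) : Matrix (Fin 2) (Fin 2) ℝ :=
  !![X1 (X1 f) p, (X1 (X2 f) p + X2 (X1 f) p) / 2;
     (X1 (X2 f) p + X2 (X1 f) p) / 2, X2 (X2 f) p]

/-- The function
`u(x,y,z,t) = (x²+y²)z² + (x²+y²)³/24 + (4z² + 2(x²+y²)²)t + 17(x²+y²)t² + (68/3)t³`. -/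
def u15 (p : Heis) (t : ℝ) : ℝ :=
  (p.1 ^ 2 + p.2.1 ^ 2) * p.2.2 ^ 2 + (p.1 ^ 2 + p.2.1 ^ 2) ^ 3 / 24
    + (4 * p.2.2 ^ 2 + 2 * (p.1 ^ 2 + p.2.1 ^ 2) ^ 2) * t
    + 17 * (p.1 ^ 2 + p.2.1 ^ 2) * t ^ 2 + 68 / 3 * t ^ 3

namespace U15Aux

def pi1 : Heis →L[ℝ] ℝ := ContinuousLinearMap.fst ℝ ℝ (ℝ × ℝ)
def pi2 : Heis →L[ℝ] ℝ := (ContinuousLinearMap.fst ℝ ℝ ℝ).comp (ContinuousLinearMap.snd ℝ ℝ (ℝ × ℝ))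
def pi3 : Heis →L[ℝ] ℝ := (ContinuousLinearMap.snd ℝ ℝ ℝ).comp (ContinuousLinearMap.snd ℝ ℝ (ℝ × ℝ))

lemma hasFDerivAt_congr' {f : Heis → ℝ} {L L' : Heis →L[ℝ] ℝ} {p : Heis}
    (h : HasFDerivAt f L p) (e : L = L') : HasFDerivAt f L' p := e ▸ h

lemma hsq {f : Heis → ℝ} {L : Heis →L[ℝ] ℝ} {p : Heis} (h : HasFDerivAt f L p) :
    HasFDerivAt (fun q => f q ^ 2) ((2 * f p) • L) p := by
  have h2 : HasFDerivAt (fun q => f q ^ 2) (f p • L + f p • L) p := by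
    refine (h.mul h).congr_of_eventuallyEq ?_
    filter_upwards with q; simp only [Pi.mul_apply]; ring
  refine hasFDerivAt_congr' h2 ?_
  ext v <;> simp <;> ring

lemma hcube {f : Heis → ℝ} {L : Heis →L[ℝ] ℝ} {p : Heis} (h : HasFDerivAt f L p) :
    HasFDerivAt (fun q => f q ^ 3) ((3 * f p ^ 2) • L) p := by
  have h2 : HasFDerivAt (fun q => f q ^ 3) (f p ^ 2 • L + f p • ((2 * f p) • L)) p := by
    refine ((hsq h).mul h).congr_of_eventuallyEq ?_
    filter_upwards with q; simp only [Pi.mul_apply]; ring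
  refine hasFDerivAt_congr' h2 ?_
  ext v <;> simp <;> ring

lemma hx (p : Heis) : HasFDerivAt (fun q : Heis => q.1) pi1 p := hasFDerivAt_fst
lemma hy (p : Heis) : HasFDerivAt (fun q : Heis => q.2.1) pi2 p :=
  hasFDerivAt_fst.comp p hasFDerivAt_snd
lemma hz (p : Heis) : HasFDerivAt (fun q : Heis => q.2.2) pi3 p :=
  hasFDerivAt_snd.comp p hasFDerivAt_snd

lemma fderiv_val {A B C : ℝ} {f : Heis → ℝ} {p : Heis}
    (h : HasFDerivAt f (A • pi1 + B • pi2 + C • pi3) p) (v : Heis) :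
    fderiv ℝ f p v = A * v.1 + B * v.2.1 + C * v.2.2 := by
  rw [h.fderiv]; simp [pi1, pi2, pi3]

/-- first horizontal derivative along X1 -/
def g1 (t : ℝ) (p : Heis) : ℝ :=
  2*p.1*p.2.2^2 + p.1*(p.1^2+p.2.1^2)^2/4 + 8*p.1*(p.1^2+p.2.1^2)*t + 34*p.1*t^2
    - p.2.1*(p.1^2+p.2.1^2)*p.2.2 - 4*p.2.1*p.2.2*t

/-- first horizontal derivative along X2 -/
def g2 (t : ℝ) (p : Heis) : ℝ :=
  2*p.2.1*p.2.2^2 + p.2.1*(p.1^2+p.2.1^2)^2/4 + 8*p.2.1*(p.1^2+p.2.1^2)*t + 34*p.2.1*t^2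
    + p.1*(p.1^2+p.2.1^2)*p.2.2 + 4*p.1*p.2.2*t

lemma u15_hD (t : ℝ) (p : Heis) :
    HasFDerivAt (fun q : Heis => u15 q t)
      ((2*p.1*p.2.2^2 + p.1*(p.1^2+p.2.1^2)^2/4 + 8*p.1*(p.1^2+p.2.1^2)*t + 34*p.1*t^2) • pi1
        + (2*p.2.1*p.2.2^2 + p.2.1*(p.1^2+p.2.1^2)^2/4 + 8*p.2.1*(p.1^2+p.2.1^2)*t + 34*p.2.1*t^2) • pi2
        + (2*(p.1^2+p.2.1^2)*p.2.2 + 8*p.2.2*t) • pi3) p := by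
  have hr := (hsq (hx p)).add (hsq (hy p))
  have H := ((((hr.mul (hsq (hz p))).add ((hcube hr).mul_const (1/24))).add
      ((((hsq (hz p)).const_mul 4).add ((hsq hr).const_mul 2)).mul_const t)).add
      ((hr.const_mul 17).mul_const (t^2))).add_const (68/3*t^3)
  refine hasFDerivAt_congr' (H.congr_of_eventuallyEq ?_) ?_
  · filter_upwards with q; simp only [u15, Pi.add_apply, Pi.mul_apply]; ring
  · ext v <;> simp [pi1, pi2, pi3] <;> ring

lemma g1_hD (t : ℝ) (p : Heis) :
    HasFDerivAt (g1 t)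
      ((2*p.2.2^2 + (p.1^2+p.2.1^2)^2/4 + p.1^2*(p.1^2+p.2.1^2) + 8*(p.1^2+p.2.1^2)*t
          + 16*p.1^2*t + 34*t^2 - 2*p.1*p.2.1*p.2.2) • pi1
        + (p.1*p.2.1*(p.1^2+p.2.1^2) + 16*p.1*p.2.1*t - (p.1^2+p.2.1^2)*p.2.2
          - 2*p.2.1^2*p.2.2 - 4*p.2.2*t) • pi2
        + (4*p.1*p.2.2 - p.2.1*(p.1^2+p.2.1^2) - 4*p.2.1*t) • pi3) p := by
  have hr := (hsq (hx p)).add (hsq (hy p))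
  have T1 := ((hx p).const_mul 2).mul (hsq (hz p))
  have T2 := ((hx p).mul (hsq hr)).mul_const (1/4)
  have T3 := (((hx p).const_mul 8).mul hr).mul_const t
  have T4 := ((hx p).const_mul 34).mul_const (t^2)
  have T5 := ((hy p).mul hr).mul (hz p)
  have T6 := (((hy p).const_mul 4).mul (hz p)).mul_const t
  have H := ((((T1.add T2).add T3).add T4).sub T5).sub T6
  refine hasFDerivAt_congr' (H.congr_of_eventuallyEq ?_) ?_
  · filter_upwards with q; simp only [g1, Pi.add_apply, Pi.sub_apply, Pi.mul_apply]; ring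
  · ext v <;> simp [pi1, pi2, pi3] <;> ring

lemma g2_hD (t : ℝ) (p : Heis) :
    HasFDerivAt (g2 t)
      ((p.1*p.2.1*(p.1^2+p.2.1^2) + 16*p.1*p.2.1*t + (p.1^2+p.2.1^2)*p.2.2
          + 2*p.1^2*p.2.2 + 4*p.2.2*t) • pi1
        + (2*p.2.2^2 + (p.1^2+p.2.1^2)^2/4 + p.2.1^2*(p.1^2+p.2.1^2) + 8*(p.1^2+p.2.1^2)*t
          + 16*p.2.1^2*t + 34*t^2 + 2*p.1*p.2.1*p.2.2) • pi2
        + (4*p.2.1*p.2.2 + p.1*(p.1^2+p.2.1^2) + 4*p.1*t) • pi3) p := by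
  have hr := (hsq (hx p)).add (hsq (hy p))
  have T1 := ((hy p).const_mul 2).mul (hsq (hz p))
  have T2 := ((hy p).mul (hsq hr)).mul_const (1/4)
  have T3 := (((hy p).const_mul 8).mul hr).mul_const t
  have T4 := ((hy p).const_mul 34).mul_const (t^2)
  have T5 := ((hx p).mul hr).mul (hz p)
  have T6 := (((hx p).const_mul 4).mul (hz p)).mul_const t
  have H := ((((T1.add T2).add T3).add T4).add T5).add T6
  refine hasFDerivAt_congr' (H.congr_of_eventuallyEq ?_) ?_
  · filter_upwards with q; simp only [g2, Pi.add_apply, Pi.mul_apply]; ring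
  · ext v <;> simp [pi1, pi2, pi3] <;> ring

lemma X1_u15 (t : ℝ) : X1 (fun q => u15 q t) = g1 t := by
  funext p
  rw [X1, fderiv_val (u15_hD t p)]
  simp only [g1]; ring

lemma X2_u15 (t : ℝ) : X2 (fun q => u15 q t) = g2 t := by
  funext p
  rw [X2, fderiv_val (u15_hD t p)]
  simp only [g2]; ring

lemma X1X1 (t : ℝ) (p : Heis) :
    X1 (X1 (fun q => u15 q t)) p
      = 2*p.2.2^2 + (p.1^2+p.2.1^2)^2/4 + p.1^2*(p.1^2+p.2.1^2) + p.2.1^2*(p.1^2+p.2.1^2)/2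
        + 8*(p.1^2+p.2.1^2)*t + 16*p.1^2*t + 2*p.2.1^2*t + 34*t^2 - 4*p.1*p.2.1*p.2.2 := by
  rw [X1_u15, X1, fderiv_val (g1_hD t p)]; ring

lemma X2X2 (t : ℝ) (p : Heis) :
    X2 (X2 (fun q => u15 q t)) p
      = 2*p.2.2^2 + (p.1^2+p.2.1^2)^2/4 + p.2.1^2*(p.1^2+p.2.1^2) + p.1^2*(p.1^2+p.2.1^2)/2
        + 8*(p.1^2+p.2.1^2)*t + 16*p.2.1^2*t + 2*p.1^2*t + 34*t^2 + 4*p.1*p.2.1*p.2.2 := by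
  rw [X2_u15, X2, fderiv_val (g2_hD t p)]; ring

lemma X1X2 (t : ℝ) (p : Heis) :
    X1 (X2 (fun q => u15 q t)) p
      = p.1*p.2.1*(p.1^2+p.2.1^2)/2 + 14*p.1*p.2.1*t + (p.1^2+p.2.1^2)*p.2.2
        + 2*p.1^2*p.2.2 - 2*p.2.1^2*p.2.2 + 4*p.2.2*t := by
  rw [X2_u15, X1, fderiv_val (g2_hD t p)]; ring

lemma X2X1 (t : ℝ) (p : Heis) :
    X2 (X1 (fun q => u15 q t)) p
      = p.1*p.2.1*(p.1^2+p.2.1^2)/2 + 14*p.1*p.2.1*t - (p.1^2+p.2.1^2)*p.2.2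
        + 2*p.1^2*p.2.2 - 2*p.2.1^2*p.2.2 - 4*p.2.2*t := by
  rw [X1_u15, X2, fderiv_val (g1_hD t p)]; ring

lemma psd2 (a b d : ℝ) (ha : 0 ≤ a) (hd : 0 ≤ d) (hq : b^2 ≤ a*d) :
    (!![a, b; b, d] : Matrix (Fin 2) (Fin 2) ℝ).PosSemidef := by
  rw [Matrix.posSemidef_iff_dotProduct_mulVec]
  constructor
  · ext i j
    fin_cases i <;> fin_cases j <;> simp [Matrix.conjTranspose_apply]
  · intro x
    have hquad : (x 0) * (a * x 0 + b * x 1) + (x 1) * (b * x 0 + d * x 1)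
        = a * x 0 ^ 2 + 2 * b * (x 0 * x 1) + d * x 1 ^ 2 := by ring
    simp [Matrix.mulVec, dotProduct, Fin.sum_univ_two]
    rw [hquad]
    rcases eq_or_lt_of_le ha with h0 | h0
    · have hb : b = 0 := by nlinarith
      rw [← h0, hb]
      nlinarith [mul_nonneg hd (sq_nonneg (x 1))]
    · nlinarith [sq_nonneg (a * x 0 + b * x 1), mul_nonneg (sub_nonneg.2 hq) (sq_nonneg (x 1))]

end U15Aux

/-- `u15` solves the horizontal heat equation classically everywhere, and for each `t ≥ 0`
its symmetrized horizontal Hessian is positive semidefinite everywhere (v-convexity). -/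
theorem u15_heat_and_vConvex :
    (∀ p : Heis, ∀ t : ℝ,
      HasDerivAt (fun s : ℝ => u15 p s) (deltaH (fun q => u15 q t) p) t) ∧
    (∀ t : ℝ, 0 ≤ t → ∀ p : Heis, (hessH (fun q => u15 q t) p).PosSemidef) := by
  constructor
  · intro p t
    have hval : deltaH (fun q => u15 q t) p
        = 4*p.2.2^2 + 2*(p.1^2+p.2.1^2)^2 + 34*(p.1^2+p.2.1^2)*t + 68*t^2 := by
      simp only [deltaH]
      rw [U15Aux.X1X1, U15Aux.X2X2]; ring
    rw [hval]
    have H := ((((hasDerivAt_id t).const_mul (4*p.2.2^2 + 2*(p.1^2+p.2.1^2)^2)).add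
        ((hasDerivAt_pow 2 t).const_mul (17*(p.1^2+p.2.1^2)))).add
        ((hasDerivAt_pow 3 t).const_mul (68/3))).const_add
        ((p.1^2+p.2.1^2)*p.2.2^2 + (p.1^2+p.2.1^2)^3/24)
    have H2 : HasDerivAt (fun s : ℝ => u15 p s) _ t := H.congr_of_eventuallyEq (by
      filter_upwards with s
      simp only [u15, id_eq, Pi.add_apply]; ring)
    have e : 4*p.2.2^2 + 2*(p.1^2+p.2.1^2)^2 + 34*(p.1^2+p.2.1^2)*t + 68*t^2
        = (4*p.2.2^2 + 2*(p.1^2+p.2.1^2)^2) * 1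
          + (17*(p.1^2+p.2.1^2)) * (↑2 * t ^ 1) + 68/3 * (↑3 * t ^ 2) := by
      push_cast; ring
    rw [e]
    exact H2
  · intro t ht p
    simp only [hessH]
    rw [U15Aux.X1X1, U15Aux.X2X2, U15Aux.X1X2, U15Aux.X2X1]
    apply U15Aux.psd2
    · nlinarith [sq_nonneg (p.2.2 - p.1*p.2.1), sq_nonneg (p.1^2), sq_nonneg (p.2.1^2),
        mul_nonneg ht (sq_nonneg p.1), mul_nonneg ht (sq_nonneg p.2.1), sq_nonneg t,
        sq_nonneg (p.1*p.2.1)]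
    · nlinarith [sq_nonneg (p.2.2 + p.1*p.2.1), sq_nonneg (p.1^2), sq_nonneg (p.2.1^2),
        mul_nonneg ht (sq_nonneg p.1), mul_nonneg ht (sq_nonneg p.2.1), sq_nonneg t,
        sq_nonneg (p.1*p.2.1)]
    · nlinarith [sq_nonneg (p.2.2^2), mul_nonneg (sq_nonneg p.2.2) (sq_nonneg t),
        mul_nonneg (mul_nonneg ht (sq_nonneg p.2.2)) (add_nonneg (sq_nonneg p.1) (sq_nonneg p.2.1)),
        sq_nonneg (t^2),
        mul_nonneg (mul_nonneg ht (sq_nonneg t)) (add_nonneg (sq_nonneg p.1) (sq_nonneg p.2.1)),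
        mul_nonneg (sq_nonneg t) (sq_nonneg (p.1^2+p.2.1^2)),
        mul_nonneg ht (pow_nonneg (add_nonneg (sq_nonneg p.1) (sq_nonneg p.2.1)) 3),
        sq_nonneg ((p.1^2+p.2.1^2)^2)]
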